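/- Let N, I, J be positive integers, and let C be a real I×N matrix, K a real N×N matrix, A a real N×J matrix, K_p a real J×J matrix, f* ∈ ℝ^N, and Q ∈ ℝ^J. Suppose q : ℝ → ℝ^N and p : ℝ → ℝ^J are differentiable functions satisfying q'(t) = K·(f* − A·p(t)) and p'(t) = K_p·(Aᵀ·q(t) − Q) for all t, and suppose t ↦ C·q(t) is constant. Set B = C·K·A and D = K_p·Aᵀ·K·A. Then for every natural number n, the function t ↦ B·Dⁿ·p(t) is constant. -/

import Mathlib

open Matrix

private lemma hasDerivAt_mulVec' {k m : ℕ} (M : Matrix (Fin m) (Fin k) ℝ)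
    {g : ℝ → Fin k → ℝ} {g' : Fin k → ℝ} {t : ℝ}
    (h : ∀ j, HasDerivAt (fun s => g s j) (g' j) t) (i : Fin m) :
    HasDerivAt (fun s => M.mulVec (g s) i) (M.mulVec g' i) t := by
  simp only [Matrix.mulVec, dotProduct]
  exact HasDerivAt.fun_sum fun j _ => (h j).const_mul _

private lemma const_of_hasDerivAt_zero {f : ℝ → ℝ}
    (h : ∀ t, HasDerivAt f 0 t) (t t' : ℝ) : f t = f t' := by
  have := is_const_of_deriv_eq_zero (fun s => (h s).differentiableAt)
    (fun s => (h s).deriv) t t'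
  exact this

private lemma deriv_zero_of_const {f : ℝ → ℝ} {d t : ℝ}
    (hc : ∀ s s', f s = f s') (h : HasDerivAt f d t) : d = 0 := by
  have hf : f = fun _ => f t := funext fun s => hc s t
  rw [hf] at h
  exact h.unique (hasDerivAt_const t (f t))

/-- Stage B: if `t ↦ M·q(t)` is constant then `t ↦ (M*K*A)·p(t)` is constant. -/
private lemma stageB {N I J : ℕ}
    (K : Matrix (Fin N) (Fin N) ℝ) (A : Matrix (Fin N) (Fin J) ℝ)
    (fstar : Fin N → ℝ) (q : ℝ → Fin N → ℝ) (p : ℝ → Fin J → ℝ)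
    (hq' : ∀ (t : ℝ) (i : Fin N),
      HasDerivAt (fun s => q s i) ((K.mulVec (fstar - A.mulVec (p t))) i) t)
    (M : Matrix (Fin I) (Fin N) ℝ)
    (hM : ∀ t t', M.mulVec (q t) = M.mulVec (q t')) :
    ∀ t t', (M * K * A).mulVec (p t) = (M * K * A).mulVec (p t') := by
  have key : ∀ t, (M * K * A).mulVec (p t) = (M * K).mulVec fstar := by
    intro t
    have hder : ∀ i, HasDerivAt (fun s => M.mulVec (q s) i)
        (M.mulVec (K.mulVec (fstar - A.mulVec (p t))) i) t :=
      fun i => hasDerivAt_mulVec' M (hq' t) i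
    have hzero : ∀ i, M.mulVec (K.mulVec (fstar - A.mulVec (p t))) i = 0 := by
      intro i
      exact deriv_zero_of_const (fun s s' => congrFun (hM s s') i) (hder i)
    have h0 : M.mulVec (K.mulVec (fstar - A.mulVec (p t))) = 0 := funext hzero
    rw [Matrix.mulVec_sub, Matrix.mulVec_sub, sub_eq_zero] at h0
    rw [Matrix.mulVec_mulVec, Matrix.mulVec_mulVec, Matrix.mulVec_mulVec] at h0
    exact h0.symm
  intro t t'
  rw [key t, key t']

/-- Stage A: if `t ↦ M·p(t)` is constant then `t ↦ (M*Kp*Aᵀ)·q(t)` is constant. -/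
private lemma stageA {N I J : ℕ}
    (A : Matrix (Fin N) (Fin J) ℝ) (Kp : Matrix (Fin J) (Fin J) ℝ)
    (Q : Fin J → ℝ) (q : ℝ → Fin N → ℝ) (p : ℝ → Fin J → ℝ)
    (hp' : ∀ (t : ℝ) (j : Fin J),
      HasDerivAt (fun s => p s j) ((Kp.mulVec (Aᵀ.mulVec (q t) - Q)) j) t)
    (M : Matrix (Fin I) (Fin J) ℝ)
    (hM : ∀ t t', M.mulVec (p t) = M.mulVec (p t')) :
    ∀ t t', (M * Kp * Aᵀ).mulVec (q t) = (M * Kp * Aᵀ).mulVec (q t') := by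
  have key : ∀ t, (M * Kp * Aᵀ).mulVec (q t) = (M * Kp).mulVec Q := by
    intro t
    have hder : ∀ i, HasDerivAt (fun s => M.mulVec (p s) i)
        (M.mulVec (Kp.mulVec (Aᵀ.mulVec (q t) - Q)) i) t :=
      fun i => hasDerivAt_mulVec' M (hp' t) i
    have hzero : ∀ i, M.mulVec (Kp.mulVec (Aᵀ.mulVec (q t) - Q)) i = 0 := by
      intro i
      exact deriv_zero_of_const (fun s s' => congrFun (hM s s') i) (hder i)
    have h0 : M.mulVec (Kp.mulVec (Aᵀ.mulVec (q t) - Q)) = 0 := funext hzero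
    rw [Matrix.mulVec_sub, Matrix.mulVec_sub, sub_eq_zero,
      Matrix.mulVec_mulVec, Matrix.mulVec_mulVec, Matrix.mulVec_mulVec] at h0
    exact h0
  intro t t'
  rw [key t, key t']

/-- If `q' = K·(f* − A·p)`, `p' = K_p·(Aᵀ·q − Q)` and
`t ↦ C·q(t)` is constant, then with `B = C·K·A` and `D = K_p·Aᵀ·K·A`, the
function `t ↦ B·Dⁿ·p(t)` is constant for every `n`. -/
theorem primal_dual_invariant_price_relations
    (N I J : ℕ) (hN : 0 < N) (hI : 0 < I) (hJ : 0 < J)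
    (C : Matrix (Fin I) (Fin N) ℝ)
    (K : Matrix (Fin N) (Fin N) ℝ)
    (A : Matrix (Fin N) (Fin J) ℝ)
    (Kp : Matrix (Fin J) (Fin J) ℝ)
    (fstar : Fin N → ℝ) (Q : Fin J → ℝ)
    (q : ℝ → Fin N → ℝ) (p : ℝ → Fin J → ℝ)
    (hq' : ∀ (t : ℝ) (i : Fin N),
      HasDerivAt (fun s => q s i) ((K.mulVec (fstar - A.mulVec (p t))) i) t)
    (hp' : ∀ (t : ℝ) (j : Fin J),
      HasDerivAt (fun s => p s j) ((Kp.mulVec (Aᵀ.mulVec (q t) - Q)) j) t)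
    (hconst : ∀ t t' : ℝ, C.mulVec (q t) = C.mulVec (q t')) :
    ∀ (n : ℕ) (t t' : ℝ),
      (C * K * A * (Kp * Aᵀ * K * A) ^ n).mulVec (p t) =
      (C * K * A * (Kp * Aᵀ * K * A) ^ n).mulVec (p t') := by
  intro n
  induction n with
  | zero =>
    simpa [pow_zero, mul_one] using stageB K A fstar q p hq' C hconst
  | succ n ih =>
    have hA := stageA A Kp Q q p hp' (C * K * A * (Kp * Aᵀ * K * A) ^ n) ih
    have hB := stageB K A fstar q p hq' (C * K * A * (Kp * Aᵀ * K * A) ^ n * Kp * Aᵀ) hA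
    intro t t'
    have heq : C * K * A * (Kp * Aᵀ * K * A) ^ (n + 1) =
        C * K * A * (Kp * Aᵀ * K * A) ^ n * Kp * Aᵀ * K * A := by
      rw [pow_succ]; simp only [Matrix.mul_assoc]
    rw [heq]
    exact hB t t'
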